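/- For unit-speed magnetic geodesics in ℝ³ with constant field (0,0,α), the point γ(π/α) equals γ(0) + α^{-1}(−2r sin θ, 2r cos θ, π z), where (r, θ, z) are the cylindrical coordinates of γ̇(0) with r² + z² = 1; consequently the set of such endpoints, as the unit initial velocity varies, is contained in the ellipsoid {q : (1/4)(q₁−p₁)² + (1/4)(q₂−p₂)² + (1/π²)(q₃−p₃)² = α^{-2}} with p = γ(0). -/

import Mathlib

open Real

/-- For unit-speed magnetic geodesics in `ℝ³` with constant field `(0,0,a)`,
`γ(π/a) = γ(0) + a⁻¹(−2r sin θ, 2r cos θ, πz)`, and the endpoint lies on the ellipsoid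
`(1/4)(q₁−p₁)² + (1/4)(q₂−p₂)² + (1/π²)(q₃−p₃)² = a⁻²`. -/
theorem magnetic_conjugate_locus (a r θ z : ℝ) (ha : 0 < a) (hr : 0 ≤ r)
    (hunit : r ^ 2 + z ^ 2 = 1) (p : Fin 3 → ℝ) :
    let γ : ℝ → Fin 3 → ℝ := fun t =>
      ![p 0 + (r / a) * (Real.sin (a * t + θ) - Real.sin θ),
        p 1 + (r / a) * (-Real.cos (a * t + θ) + Real.cos θ),
        p 2 + t * z]
    let q : Fin 3 → ℝ := γ (π / a)
    q = ![p 0 + a⁻¹ * (-2 * r * Real.sin θ),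
          p 1 + a⁻¹ * (2 * r * Real.cos θ),
          p 2 + a⁻¹ * (π * z)] ∧
      (1 / 4) * (q 0 - p 0) ^ 2 + (1 / 4) * (q 1 - p 1) ^ 2 +
        (1 / π ^ 2) * (q 2 - p 2) ^ 2 = (a⁻¹) ^ 2 := by
  intro γ q
  have ha' : a ≠ 0 := ne_of_gt ha
  have harg : a * (π / a) = π := by field_simp
  have hq : q = ![p 0 + a⁻¹ * (-2 * r * Real.sin θ),
          p 1 + a⁻¹ * (2 * r * Real.cos θ),
          p 2 + a⁻¹ * (π * z)] := by
    funext i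
    fin_cases i <;>
      simp [q, γ, harg, Real.sin_add, Real.cos_add] <;>
      field_simp <;> ring
  refine ⟨hq, ?_⟩
  have hπ : π ≠ 0 := Real.pi_ne_zero
  rw [hq]
  simp only [Matrix.cons_val_zero, Matrix.cons_val_one, Matrix.head_cons,
    Matrix.cons_val_two, Matrix.tail_cons]
  have key : (1/4) * (a⁻¹ * (-2 * r * Real.sin θ))^2 + (1/4) * (a⁻¹ * (2 * r * Real.cos θ))^2
      + (1/π^2) * (a⁻¹ * (π * z))^2 = (a⁻¹)^2 := by
    have hsc : Real.sin θ ^ 2 + Real.cos θ ^ 2 = 1 := Real.sin_sq_add_cos_sq θ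
    have h3 : (1/π^2) * (a⁻¹ * (π * z))^2 = (a⁻¹)^2 * z^2 := by
      field_simp
    rw [h3]
    linear_combination (a⁻¹)^2 * r^2 * hsc + (a⁻¹)^2 * hunit
  linarith [key]
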